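/- arXiv:1512.03514 — 2 statements merged into one kernel-verified Lean document; each statement's English description precedes it below -/
import Mathlib

section
/- Let μ > 0, let n ≥ 1 be an integer, and let x > 0. Then ∫_0^π e^{−x cos θ} C_n^μ(cos θ) sin^{2μ} θ dθ = (2^μ (−1)^n √π Γ(μ+1/2) Γ(2μ+n) / (n! Γ(2μ))) · I_{μ+n}(x) / x^μ. -/
open MeasureTheory ProbabilityTheory Real Filter Set
open scoped ENNReal NNReal Topology

/-- Modified Bessel function of the first kind `I_μ(x)`, defined by its series. -/
noncomputable def besselI (μ x : ℝ) : ℝ :=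
  ∑' k : ℕ, (x / 2) ^ (2 * (k : ℝ) + μ) / ((k.factorial : ℝ) * Real.Gamma ((k : ℝ) + μ + 1))

/-- Macdonald function (modified Bessel function of the second kind) `K_μ(x)`. -/
noncomputable def besselK (μ x : ℝ) : ℝ :=
  ∫ t in Set.Ioi (0 : ℝ), Real.exp (-(x * Real.cosh t)) * Real.cosh (μ * t)

/-- `S_m = 2 π^{(m+1)/2} / Γ((m+1)/2)`, the surface area of the `m`-dimensional unit sphere. -/
noncomputable def sphereArea (m : ℕ) : ℝ :=
  2 * Real.pi ^ (((m : ℝ) + 1) / 2) / Real.Gamma (((m : ℝ) + 1) / 2)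

/-- The coefficient `ξ_{μ,n}(y)`. -/
noncomputable def xiCoef (μ : ℝ) (n : ℕ) (y : ℝ) : ℝ :=
  if μ = 0 ∧ n = 0 then besselI 0 y ^ 2 / 2
  else (-1 : ℝ) ^ n * (μ + n) * Real.Gamma (2 * μ + n) * besselI (μ + n) y ^ 2
    / (n.factorial : ℝ)

/-- The coefficient `ζ_{μ,n}(y)`. -/
noncomputable def zetaCoef (μ : ℝ) (n : ℕ) (y : ℝ) : ℝ :=
  if μ = 0 ∧ n = 0 then besselI 0 y * besselI 1 y / 2
  else (-1 : ℝ) ^ n * (μ + n) * Real.Gamma (2 * μ + n) * besselI (μ + n) y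
    * besselI (μ + n + 1) y / (n.factorial : ℝ)

/-- A standard `d`-dimensional Brownian motion on a probability space `(Ω, P)`. -/
structure IsBrownianMotion {Ω : Type*} [MeasurableSpace Ω] (P : Measure Ω) (d : ℕ)
    (B : ℝ → Ω → EuclideanSpace ℝ (Fin d)) : Prop where
  isProb : IsProbabilityMeasure P
  meas : ∀ t : ℝ, Measurable (B t)
  cont : ∀ᵐ ω ∂P, Continuous fun t : ℝ => B t ω
  init : ∀ᵐ ω ∂P, B 0 ω = 0
  indep_incr : ∀ (n : ℕ) (t : Fin (n + 1) → ℝ), Monotone t → (∀ i, 0 ≤ t i) →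
    iIndepFun
      (fun i : Fin n => fun ω => B (t i.succ) ω - B (t i.castSucc) ω) P
  gauss_coord : ∀ s t : ℝ, 0 ≤ s → s ≤ t → ∀ i : Fin d,
    Measure.map (fun ω => (B t ω - B s ω) i) P = gaussianReal 0 (Real.toNNReal (t - s))
  indep_coord : ∀ s t : ℝ, 0 ≤ s → s ≤ t →
    iIndepFun
      (fun (i : Fin d) (ω : Ω) => (B t ω - B s ω) i) P

/-- Hitting time of the closed ball of radius `r` by the drifted process `B(s)+sv` started
shifted by `x`. -/
noncomputable def hitTime {Ω : Type*} {d : ℕ} (B : ℝ → Ω → EuclideanSpace ℝ (Fin d))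
    (v x : EuclideanSpace ℝ (Fin d)) (r : ℝ) (ω : Ω) : ℝ :=
  sInf {s : ℝ | 0 ≤ s ∧ ‖B s ω + s • v + x‖ ≤ r}

/-- `L_v^d(t) = ∫_{ℝ^d ∖ D} P(τ_v(x) ≤ t) dx`. -/
noncomputable def sausageL {Ω : Type*} [MeasurableSpace Ω] (P : Measure Ω) {d : ℕ}
    (B : ℝ → Ω → EuclideanSpace ℝ (Fin d)) (v : EuclideanSpace ℝ (Fin d)) (r t : ℝ) : ℝ :=
  ∫ x in (Metric.closedBall (0 : EuclideanSpace ℝ (Fin d)) r)ᶜ,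
    (P {ω | hitTime B v x r ω ≤ t}).toReal

/-- `Σ_v^m(t) = e^{-|v|² t / 2} L_0^m(t)`, where `L0` stands for `L_0^m`. -/
noncomputable def sigmaV (vnorm : ℝ) (L0 : ℝ → ℝ) (t : ℝ) : ℝ :=
  Real.exp (-(vnorm ^ 2 * t / 2)) * L0 t

/-- `Σ̃_v^m(t)`. -/
noncomputable def sigmaTilde (vnorm : ℝ) (L0 : ℝ → ℝ) (t : ℝ) : ℝ :=
  sigmaV vnorm L0 t + vnorm ^ 2 * ∫ s in (0:ℝ)..t, sigmaV vnorm L0 s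
    + vnorm ^ 4 / 4 * ∫ s in (0:ℝ)..t, (t - s) * sigmaV vnorm L0 s

/-- The function `F_μ(λ)` (depending on `|v|` and `r`). -/
noncomputable def Fmu (vnorm r μ lam : ℝ) : ℝ :=
  Real.sqrt (2 * lam + vnorm ^ 2) / lam ^ 2
    * besselK (μ + 1) (r * Real.sqrt (2 * lam + vnorm ^ 2))
    / besselK μ (r * Real.sqrt (2 * lam + vnorm ^ 2))

/-- The Gegenbauer polynomial `C_n^μ(x)` for `μ > 0`. -/
noncomputable def gegenbauerC (μ : ℝ) (n : ℕ) (x : ℝ) : ℝ :=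
  (1 / Real.Gamma μ) * ∑ m ∈ Finset.range (n / 2 + 1),
    (-1 : ℝ) ^ m * Real.Gamma (μ + n - m) / ((m.factorial : ℝ) * ((n - 2 * m).factorial : ℝ))
      * (2 * x) ^ (n - 2 * m)

/-- The constant `N_v^d` (as a function of `|v|`), the linear growth rate of the expected
volume of the Wiener sausage with drift. -/
noncomputable def NvD (d : ℕ) (r y : ℝ) : ℝ :=
  if d = 2 then
    Real.pi * besselI 0 (r * y) / besselK 0 (r * y)
      + 2 * Real.pi * ∑' n : ℕ,
        (-1 : ℝ) ^ (n + 1) * besselI ((n : ℝ) + 1) (r * y) / besselK ((n : ℝ) + 1) (r * y)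
  else
    Real.pi * sphereArea (d - 2) / y ^ ((d : ℝ) - 2) * ∑' n : ℕ,
      (-1 : ℝ) ^ n * (((d : ℝ) / 2 - 1) + n) * Real.Gamma (2 * ((d : ℝ) / 2 - 1) + n)
        / (n.factorial : ℝ)
        * besselI (((d : ℝ) / 2 - 1) + n) (r * y) / besselK (((d : ℝ) / 2 - 1) + n) (r * y)


lemma betaCongr {a b : ℝ} : ∀ x ∈ Set.uIcc (0:ℝ) 1,
    ((x:ℂ) ^ ((a:ℂ)-1) * ((1:ℂ)-x) ^ ((b:ℂ)-1)) = ((x ^ (a-1) * (1-x) ^ (b-1) : ℝ) : ℂ) := by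
  intro x hx
  rw [Set.uIcc_of_le (by norm_num : (0:ℝ) ≤ 1)] at hx
  have h0 : (0:ℝ) ≤ x := hx.1
  have h1 : (0:ℝ) ≤ 1 - x := by linarith [hx.2]
  push_cast
  rw [Complex.ofReal_cpow h0, Complex.ofReal_cpow h1]
  push_cast
  ring

lemma betaReal {a b : ℝ} (ha : 0 < a) (hb : 0 < b) :
    ∫ s in Set.Ioo (0:ℝ) 1, s ^ (a-1) * (1-s) ^ (b-1)
      = Real.Gamma a * Real.Gamma b / Real.Gamma (a+b) := by
  have hβ : Complex.betaIntegral a b = ((∫ s in (0:ℝ)..1, s ^ (a-1) * (1-s) ^ (b-1) : ℝ) : ℂ) := by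
    rw [Complex.betaIntegral, ← intervalIntegral.integral_ofReal]
    exact intervalIntegral.integral_congr betaCongr
  have key := Complex.Gamma_mul_Gamma_eq_betaIntegral
      (s := a) (t := b) (by simpa using ha) (by simpa using hb)
  rw [hβ, ← Complex.ofReal_add, Complex.Gamma_ofReal, Complex.Gamma_ofReal,
    Complex.Gamma_ofReal, ← Complex.ofReal_mul, ← Complex.ofReal_mul] at key
  have key' := Complex.ofReal_injective key
  have hne : Real.Gamma (a+b) ≠ 0 := (Real.Gamma_pos_of_pos (by linarith)).ne'
  rw [intervalIntegral.integral_of_le (by norm_num : (0:ℝ) ≤ 1),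
    MeasureTheory.integral_Ioc_eq_integral_Ioo] at key'
  field_simp
  linarith [key']

lemma intOn_betaReal {a b : ℝ} (ha : 0 < a) (hb : 0 < b) :
    IntegrableOn (fun s => s ^ (a-1) * (1-s) ^ (b-1)) (Set.Ioo (0:ℝ) 1) := by
  have h := Complex.betaIntegral_convergent (u := a) (v := b) (by simpa using ha) (by simpa using hb)
  have h2 : IntervalIntegrable (fun s : ℝ => ((s ^ (a-1) * (1-s) ^ (b-1) : ℝ) : ℂ)) volume 0 1 := by
    apply h.congr
    have hss : Set.uIoc (0:ℝ) 1 ⊆ Set.uIcc (0:ℝ) 1 := Set.uIoc_subset_uIcc ..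
    exact fun x hx => betaCongr x (hss hx)
  rw [intervalIntegrable_iff_integrableOn_Ioc_of_le (by norm_num : (0:ℝ) ≤ 1),
    integrableOn_Ioc_iff_integrableOn_Ioo] at h2
  simpa [IntegrableOn] using h2.re

lemma image_cos_Ioo : Real.cos '' Set.Ioo 0 π = Set.Ioo (-1 : ℝ) 1 := by
  ext y
  constructor
  · rintro ⟨θ, hθ, rfl⟩
    have h0 : (0:ℝ) ∈ Set.Icc (0:ℝ) π := ⟨le_refl 0, pi_pos.le⟩
    have hπ : π ∈ Set.Icc (0:ℝ) π := ⟨pi_pos.le, le_refl π⟩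
    have hθ' : θ ∈ Set.Icc (0:ℝ) π := ⟨hθ.1.le, hθ.2.le⟩
    constructor
    · have := Real.strictAntiOn_cos hθ' hπ hθ.2
      simpa using this
    · have := Real.strictAntiOn_cos h0 hθ' hθ.1
      simpa using this
  · intro hy
    refine ⟨Real.arccos y, ⟨Real.arccos_pos.2 hy.2, ?_⟩, Real.cos_arccos hy.1.le hy.2.le⟩
    rcases lt_or_eq_of_le (Real.arccos_le_pi y) with h | h
    · exact h
    · exfalso
      have : y = -1 := by
        have := Real.cos_arccos hy.1.le hy.2.le
        rw [h, Real.cos_pi] at this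
        linarith
      linarith [hy.1]

lemma injOn_cos : Set.InjOn Real.cos (Set.Ioo 0 π) :=
  Real.strictAntiOn_cos.injOn.mono (fun x h => Set.mem_Icc.2 ⟨h.1.le, h.2.le⟩)

lemma cos_deriv_within : ∀ θ ∈ Set.Ioo (0:ℝ) π,
    HasDerivWithinAt Real.cos (-Real.sin θ) (Set.Ioo 0 π) θ :=
  fun θ _ => (Real.hasDerivAt_cos θ).hasDerivWithinAt

lemma key_ptwise {μ : ℝ} (hμ : 0 < μ) (p : ℕ) : ∀ θ ∈ Set.Ioo (0:ℝ) π,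
    |(-Real.sin θ)| • (Real.cos θ ^ p * (1 - Real.cos θ ^ 2) ^ (μ - 1/2))
      = Real.cos θ ^ p * Real.sin θ ^ (2*μ) := by
  intro θ hθ
  have hs : 0 < Real.sin θ := Real.sin_pos_of_pos_of_lt_pi hθ.1 hθ.2
  have h1 : (1 : ℝ) - Real.cos θ ^ 2 = Real.sin θ ^ 2 := by
    rw [Real.sin_sq]
  have h2 : (Real.sin θ ^ 2 : ℝ) ^ (μ - 1/2) = Real.sin θ ^ (2*μ - 1) := by
    rw [← Real.rpow_natCast (Real.sin θ) 2, ← Real.rpow_mul hs.le]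
    norm_num
    ring_nf
  have h3 : |(-Real.sin θ)| = Real.sin θ := by
    rw [abs_neg, abs_of_pos hs]
  rw [h1, h2, h3, smul_eq_mul]
  rw [show Real.sin θ * (Real.cos θ ^ p * Real.sin θ ^ (2*μ - 1))
      = Real.cos θ ^ p * (Real.sin θ ^ (1:ℝ) * Real.sin θ ^ (2*μ-1)) by
    rw [Real.rpow_one]; ring]
  rw [← Real.rpow_add hs]
  norm_num

lemma mom_theta {μ : ℝ} (hμ : 0 < μ) (p : ℕ) :
    ∫ θ in Set.Ioo (0:ℝ) π, Real.cos θ ^ p * Real.sin θ ^ (2*μ)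
      = ∫ u in Set.Ioo (-1:ℝ) 1, u ^ p * (1-u^2) ^ (μ-1/2) := by
  rw [← image_cos_Ioo,
    integral_image_eq_integral_abs_deriv_smul measurableSet_Ioo cos_deriv_within injOn_cos]
  exact (MeasureTheory.setIntegral_congr_fun measurableSet_Ioo (key_ptwise hμ p)).symm

lemma image_sq_Ioo : (fun u : ℝ => u ^ 2) '' Set.Ioo 0 1 = Set.Ioo (0:ℝ) 1 := by
  ext s
  constructor
  · rintro ⟨u, hu, rfl⟩
    simp only [Set.mem_Ioo]
    exact ⟨by simpa using pow_pos hu.1 2, by nlinarith [hu.1, hu.2]⟩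
  · intro hs
    refine ⟨Real.sqrt s, ⟨Real.sqrt_pos.2 hs.1, ?_⟩, Real.sq_sqrt hs.1.le⟩
    nlinarith [Real.sq_sqrt hs.1.le, Real.sqrt_nonneg s, hs.2]

lemma injOn_sq : Set.InjOn (fun u : ℝ => u ^ 2) (Set.Ioo 0 1) := by
  intro a ha b hb h
  simp only at h
  nlinarith [ha.1, hb.1]

lemma sq_deriv_within : ∀ u ∈ Set.Ioo (0:ℝ) 1,
    HasDerivWithinAt (fun u : ℝ => u ^ 2) (2*u) (Set.Ioo 0 1) u := by
  intro u _
  simpa using (hasDerivAt_pow 2 u).hasDerivWithinAt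

lemma sq_ptwise {μ : ℝ} (hμ : 0 < μ) (p : ℕ) : ∀ u ∈ Set.Ioo (0:ℝ) 1,
    |2*u| • ((u^2) ^ (((p:ℝ)/2 + 1/2) - 1) * (1-u^2) ^ ((μ + 1/2) - 1))
      = 2 * (u ^ p * (1-u^2) ^ (μ - 1/2)) := by
  intro u hu
  have hu0 : 0 < u := hu.1
  have h2 : ((u^2 : ℝ)) ^ (((p:ℝ)/2 + 1/2) - 1) = u ^ ((p:ℝ) - 1) := by
    rw [← Real.rpow_natCast u 2, ← Real.rpow_mul hu0.le]
    norm_num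
    ring_nf
  rw [h2, abs_of_pos (by linarith), smul_eq_mul]
  have h3 : u * u ^ ((p:ℝ) - 1) = u ^ p := by
    rw [show (u : ℝ) * u ^ ((p:ℝ)-1) = u ^ (1:ℝ) * u ^ ((p:ℝ)-1) by rw [Real.rpow_one],
      ← Real.rpow_add hu0]
    norm_num
  have h4 : (μ + 1/2) - 1 = μ - 1/2 := by ring
  rw [h4, show 2*u*(u ^ ((p:ℝ)-1) * (1-u^2) ^ (μ-1/2))
      = 2*((u * u ^ ((p:ℝ)-1)) * (1-u^2) ^ (μ-1/2)) by ring, h3]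

lemma intOn_u_right {μ : ℝ} (hμ : 0 < μ) (p : ℕ) :
    IntegrableOn (fun u : ℝ => u ^ p * (1-u^2) ^ (μ - 1/2)) (Set.Ioo 0 1) := by
  have hb := intOn_betaReal (a := (p:ℝ)/2 + 1/2) (b := μ + 1/2) (by positivity) (by linarith)
  rw [← image_sq_Ioo, integrableOn_image_iff_integrableOn_abs_deriv_smul measurableSet_Ioo
    sq_deriv_within injOn_sq] at hb
  have hb2 : IntegrableOn (fun u : ℝ => 2 * (u ^ p * (1-u^2) ^ (μ - 1/2))) (Set.Ioo 0 1) := by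
    apply hb.congr_fun _ measurableSet_Ioo
    intro u hu
    exact sq_ptwise hμ p u hu
  have h5 : IntegrableOn (fun u : ℝ => (1/2 : ℝ) * (2 * (u ^ p * (1-u^2) ^ (μ - 1/2))))
      (Set.Ioo 0 1) := hb2.const_mul (1/2 : ℝ)
  apply h5.congr_fun _ measurableSet_Ioo
  intro u _
  ring

lemma intOn_u {μ : ℝ} (hμ : 0 < μ) (p : ℕ) :
    IntegrableOn (fun u : ℝ => u ^ p * (1-u^2) ^ (μ - 1/2)) (Set.Ioo (-1) 1) := by
  have hIco : IntegrableOn (fun u : ℝ => u ^ p * (1-u^2) ^ (μ - 1/2)) (Set.Ico 0 1) := by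
    rw [integrableOn_Ico_iff_integrableOn_Ioo]
    exact intOn_u_right hμ p
  have hneg : IntegrableOn (fun u : ℝ => u ^ p * (1-u^2) ^ (μ - 1/2)) (Set.Ioc (-1) 0) := by
    have himg : Neg.neg '' Set.Ico (0:ℝ) 1 = Set.Ioc (-1) 0 := by
      rw [Set.image_neg_Ico]; norm_num
    rw [← himg, integrableOn_image_iff_integrableOn_abs_deriv_smul measurableSet_Ico
      (fun u _ => (hasDerivAt_neg u).hasDerivWithinAt) (fun a _ b _ h => neg_injective h)]
    have : IntegrableOn (fun u : ℝ => (-1:ℝ)^p * (u ^ p * (1-u^2) ^ (μ - 1/2))) (Set.Ico 0 1) :=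
      hIco.const_mul _
    apply this.congr_fun _ measurableSet_Ico
    intro u _
    show _ = |(-1:ℝ)| • ((-u) ^ p * (1 - (-u) ^ 2) ^ (μ - 1 / 2))
    rw [smul_eq_mul, abs_neg, abs_one, one_mul, neg_sq, neg_pow]
    ring
  have hunion := hneg.union (intOn_u_right hμ p)
  rwa [Set.Ioc_union_Ioo_eq_Ioo (by norm_num : (-1:ℝ) ≤ 0) (by norm_num : (0:ℝ) < 1)] at hunion

lemma intOn_theta {μ : ℝ} (hμ : 0 < μ) (p : ℕ) :
    IntegrableOn (fun θ : ℝ => Real.cos θ ^ p * Real.sin θ ^ (2*μ)) (Set.Ioo 0 π) := by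
  have := intOn_u hμ p
  rw [← image_cos_Ioo, integrableOn_image_iff_integrableOn_abs_deriv_smul measurableSet_Ioo
    cos_deriv_within injOn_cos] at this
  exact this.congr_fun (fun θ hθ => key_ptwise hμ p θ hθ) measurableSet_Ioo

lemma mom_reflect {μ : ℝ} (p : ℕ) :
    ∫ u in Set.Ioc (-1:ℝ) 0, u ^ p * (1-u^2) ^ (μ - 1/2)
      = (-1:ℝ)^p * ∫ u in Set.Ioo (0:ℝ) 1, u ^ p * (1-u^2) ^ (μ - 1/2) := by
  have himg : Neg.neg '' Set.Ico (0:ℝ) 1 = Set.Ioc (-1) 0 := by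
    rw [Set.image_neg_Ico]; norm_num
  rw [← himg, integral_image_eq_integral_abs_deriv_smul measurableSet_Ico
    (fun u _ => (hasDerivAt_neg u).hasDerivWithinAt) (fun a _ b _ h => neg_injective h)]
  rw [← MeasureTheory.integral_Ico_eq_integral_Ioo, ← MeasureTheory.integral_const_mul]
  apply MeasureTheory.setIntegral_congr_fun measurableSet_Ico
  intro u _
  show |(-1:ℝ)| • ((-u) ^ p * (1 - (-u) ^ 2) ^ (μ - 1 / 2)) = _
  rw [smul_eq_mul, abs_neg, abs_one, one_mul, neg_sq, neg_pow]
  ring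

lemma mom_split {μ : ℝ} (hμ : 0 < μ) (p : ℕ) :
    ∫ u in Set.Ioo (-1:ℝ) 1, u ^ p * (1-u^2) ^ (μ - 1/2)
      = (1 + (-1:ℝ)^p) * ∫ u in Set.Ioo (0:ℝ) 1, u ^ p * (1-u^2) ^ (μ - 1/2) := by
  rw [← Set.Ioc_union_Ioo_eq_Ioo (by norm_num : (-1:ℝ) ≤ 0) (by norm_num : (0:ℝ) < 1),
    MeasureTheory.setIntegral_union (by rw [Set.disjoint_left]; rintro a ha hb; exact absurd hb.1 (not_lt.2 ha.2)) measurableSet_Ioo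
      (by rw [integrableOn_Ioc_iff_integrableOn_Ioo]
          exact (intOn_u hμ p).mono_set (Set.Ioo_subset_Ioo (le_refl _) (by norm_num)))
      (intOn_u_right hμ p),
    mom_reflect]
  ring

lemma mom_odd {μ : ℝ} (hμ : 0 < μ) {p : ℕ} (hp : Odd p) :
    ∫ u in Set.Ioo (-1:ℝ) 1, u ^ p * (1-u^2) ^ (μ - 1/2) = 0 := by
  rw [mom_split hμ p, hp.neg_one_pow]
  ring

lemma mom_even {μ : ℝ} (hμ : 0 < μ) (q : ℕ) :
    ∫ u in Set.Ioo (-1:ℝ) 1, u ^ (2*q) * (1-u^2) ^ (μ - 1/2)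
      = Real.Gamma ((q:ℝ)+1/2) * Real.Gamma (μ+1/2) / Real.Gamma ((q:ℝ)+μ+1) := by
  have h2 := betaReal (a := ((2*q : ℕ):ℝ)/2 + 1/2) (b := μ + 1/2)
    (by positivity) (by linarith)
  rw [← image_sq_Ioo, integral_image_eq_integral_abs_deriv_smul measurableSet_Ioo
    sq_deriv_within injOn_sq,
    MeasureTheory.setIntegral_congr_fun measurableSet_Ioo (sq_ptwise hμ (2*q)),
    MeasureTheory.integral_const_mul] at h2
  rw [mom_split hμ (2*q)]
  have hcast : ((2*q : ℕ):ℝ)/2 + 1/2 = (q:ℝ) + 1/2 := by push_cast; ring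
  have hcast2 : (q:ℝ) + 1/2 + (μ + 1/2) = (q:ℝ) + μ + 1 := by push_cast; ring
  rw [hcast, hcast2] at h2
  rw [pow_mul, neg_one_sq, one_pow]
  linarith [h2]

lemma Gamma_nat_add_half (q : ℕ) :
    Real.Gamma ((q:ℝ) + 1/2)
      = Real.sqrt π * (2*q).factorial / (4^q * q.factorial) := by
  have h := Real.Gamma_mul_Gamma_add_half ((q:ℝ) + 1/2)
  have h1 : (q:ℝ) + 1/2 + 1/2 = (q:ℝ) + 1 := by ring
  have h2 : 2 * ((q:ℝ) + 1/2) = ((2*q : ℕ):ℝ) + 1 := by push_cast; ring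
  rw [h1, h2, Real.Gamma_nat_eq_factorial, Real.Gamma_nat_eq_factorial] at h
  have h3 : (2:ℝ) ^ ((1:ℝ) - (((2*q : ℕ):ℝ) + 1)) = (4^q : ℝ)⁻¹ := by
    rw [show (1 : ℝ) - (((2*q : ℕ):ℝ)+1) = -((2*q : ℕ):ℝ) by push_cast; ring,
      Real.rpow_neg (by norm_num), Real.rpow_natCast]
    norm_num [pow_mul]
  rw [h3] at h
  have hfac : (0:ℝ) < q.factorial := by positivity
  have h4 : (0:ℝ) < 4^q := by positivity
  field_simp at h ⊢
  nlinarith [h]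

noncomputable def aa (μ : ℝ) (n m : ℕ) : ℝ :=
  if 2*m ≤ n then (-1:ℝ)^m * Real.Gamma (μ + n - m) / (m.factorial * (n - 2*m).factorial)
  else 0

noncomputable def bb (μ : ℝ) (q m : ℕ) : ℝ :=
  if m ≤ q then ((2*(q-m)).factorial : ℝ) / ((q-m).factorial * Real.Gamma (((q-m : ℕ):ℝ) + μ + 1))
  else 0

noncomputable def Hs (μ : ℝ) (n q : ℕ) : ℝ := ∑ m ∈ Finset.range (q+1), aa μ n m * bb μ q m

noncomputable def Rv (μ : ℝ) (n q : ℕ) : ℝ :=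
  if n ≤ q then Real.Gamma μ * Real.Gamma (2*μ + n) * ((2*q - n).factorial : ℝ)
    / (n.factorial * (q - n).factorial * Real.Gamma ((q:ℝ) + μ + 1) * Real.Gamma (2*μ))
  else 0

lemma fact_ne (k : ℕ) : ((k.factorial : ℝ)) ≠ 0 := Nat.cast_ne_zero.mpr k.factorial_ne_zero

lemma aa_rec_zero {μ : ℝ} (hμ : 0 < μ) (n : ℕ) :
    ((n:ℝ)+2) * aa μ (n+2) 0 = ((n:ℝ)+1+μ) * aa μ (n+1) 0 := by
  rw [aa, aa, if_pos (by omega), if_pos (by omega)]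
  have h1 : μ + ((n:ℕ)+2 : ℕ) - (0:ℕ) = (μ + ((n:ℕ)+1 : ℕ) - (0:ℕ)) + 1 := by push_cast; ring
  rw [h1, Real.Gamma_add_one (ne_of_gt (by
    push_cast
    have h01 : (0:ℝ) ≤ (n:ℝ) := Nat.cast_nonneg n
    linarith))]
  have h2 : ((n:ℕ)+2 : ℕ) - 2*0 = n+2 := by omega
  have h3 : ((n:ℕ)+1 : ℕ) - 2*0 = n+1 := by omega
  rw [h2, h3, Nat.factorial_succ (n+1)]
  push_cast
  field_simp
  ring

lemma aa_rec_succ {μ : ℝ} (hμ : 0 < μ) (n m : ℕ) :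
    ((n:ℝ)+2) * aa μ (n+2) (m+1)
      = ((n:ℝ)+1+μ) * aa μ (n+1) (m+1) - ((n:ℝ)+2*μ) * aa μ n m := by
  rcases le_or_gt (2*(m+1)) (n+1) with h | h
  · -- generic case : n = 2m+1+r
    obtain ⟨r, rfl⟩ : ∃ r, n = 2*m+1+r := ⟨n - (2*m+1), by omega⟩
    rw [aa, aa, aa, if_pos (by omega), if_pos (by omega), if_pos (by omega)]
    have e1 : (2*m+1+r+2 : ℕ) - 2*(m+1) = r+1 := by omega
    have e2 : (2*m+1+r+1 : ℕ) - 2*(m+1) = r := by omega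
    have e3 : (2*m+1+r : ℕ) - 2*m = r+1 := by omega
    rw [e1, e2, e3]
    have g1 : μ + ((2*m+1+r+2 : ℕ):ℝ) - ((m+1 : ℕ):ℝ)
        = (μ + ((2*m+1+r+1 : ℕ):ℝ) - ((m+1 : ℕ):ℝ)) + 1 := by push_cast; ring
    have g2 : μ + ((2*m+1+r : ℕ):ℝ) - ((m : ℕ):ℝ)
        = μ + ((2*m+1+r+1 : ℕ):ℝ) - ((m+1 : ℕ):ℝ) := by push_cast; ring
    rw [g1, Real.Gamma_add_one (ne_of_gt (by
      push_cast
      have h01 : (0:ℝ) ≤ (m:ℝ) := Nat.cast_nonneg m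
      have h02 : (0:ℝ) ≤ (r:ℝ) := Nat.cast_nonneg r
      linarith)), g2]
    rw [Nat.factorial_succ m, Nat.factorial_succ r, pow_succ]
    push_cast
    field_simp
    ring
  · rcases le_or_gt (2*(m+1)) (n+2) with h2 | h2
    · -- boundary case : n = 2*m
      obtain rfl : n = 2*m := by omega
      rw [aa, aa, aa, if_pos (by omega), if_neg (by omega), if_pos (by omega)]
      have e1 : (2*m+2 : ℕ) - 2*(m+1) = 0 := by omega
      have e2 : (2*m : ℕ) - 2*m = 0 := by omega
      rw [e1, e2]
      have g1 : μ + ((2*m+2 : ℕ):ℝ) - ((m+1 : ℕ):ℝ)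
          = (μ + ((2*m : ℕ):ℝ) - ((m : ℕ):ℝ)) + 1 := by push_cast; ring
      rw [g1, Real.Gamma_add_one (ne_of_gt (by
        push_cast
        have h01 : (0:ℝ) ≤ (m:ℝ) := Nat.cast_nonneg m
        linarith))]
      rw [Nat.factorial_succ m, pow_succ, Nat.factorial_zero]
      push_cast
      field_simp
      ring
    · -- all vanish
      rw [aa, aa, aa, if_neg (by omega), if_neg (by omega), if_neg (by omega)]
      ring

lemma bb_shift (μ : ℝ) (q m : ℕ) (hq : 1 ≤ q) : bb μ (q-1) m = bb μ q (m+1) := by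
  rcases le_or_gt (m+1) q with h | h
  · rw [bb, bb, if_pos (by omega), if_pos h]
    have : q - 1 - m = q - (m+1) := by omega
    rw [this]
  · rw [bb, bb, if_neg (by omega), if_neg (by omega)]

lemma Hs_rec {μ : ℝ} (hμ : 0 < μ) (n q : ℕ) (hq : 1 ≤ q) :
    ((n:ℝ)+2) * Hs μ (n+2) q = ((n:ℝ)+1+μ) * Hs μ (n+1) q - ((n:ℝ)+2*μ) * Hs μ n (q-1) := by
  have key : ∀ m : ℕ,
      ((n:ℝ)+2) * (aa μ (n+2) (m+1) * bb μ q (m+1))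
        - ((n:ℝ)+1+μ) * (aa μ (n+1) (m+1) * bb μ q (m+1))
      = -(((n:ℝ)+2*μ) * (aa μ n m * bb μ q (m+1))) := by
    intro m
    have := aa_rec_succ hμ n m
    linear_combination bb μ q (m+1) * this
  have hsum : ((n:ℝ)+2) * Hs μ (n+2) q - ((n:ℝ)+1+μ) * Hs μ (n+1) q
      = -(((n:ℝ)+2*μ) * Hs μ n (q-1)) := by
    unfold Hs
    rw [show q - 1 + 1 = q from by omega]
    rw [Finset.mul_sum, Finset.mul_sum, Finset.mul_sum, ← Finset.sum_sub_distrib]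
    rw [Finset.sum_range_succ' (fun m => ((n:ℝ)+2) * (aa μ (n+2) m * bb μ q m)
      - ((n:ℝ)+1+μ) * (aa μ (n+1) m * bb μ q m)) q]
    have h0 : ((n:ℝ)+2) * (aa μ (n+2) 0 * bb μ q 0)
        - ((n:ℝ)+1+μ) * (aa μ (n+1) 0 * bb μ q 0) = 0 := by
      have := aa_rec_zero hμ n
      linear_combination bb μ q 0 * this
    rw [h0, add_zero, ← Finset.sum_neg_distrib]
    apply Finset.sum_congr rfl
    intro m _
    rw [key m, bb_shift μ q m hq]
  linarith [hsum]

lemma Rv_rec {μ : ℝ} (hμ : 0 < μ) (n q : ℕ) (hq : 1 ≤ q) :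
    ((n:ℝ)+2) * Rv μ (n+2) q = ((n:ℝ)+1+μ) * Rv μ (n+1) q - ((n:ℝ)+2*μ) * Rv μ n (q-1) := by
  have hΓ2μ : Real.Gamma (2*μ) ≠ 0 := (Real.Gamma_pos_of_pos (by linarith)).ne'
  have hΓn : Real.Gamma (2*μ + n) > 0 := Real.Gamma_pos_of_pos (by positivity)
  rcases le_or_gt (n+2) q with h | h
  · obtain ⟨j, rfl⟩ : ∃ j, q = n+2+j := ⟨q - (n+2), by omega⟩
    rw [Rv, Rv, Rv, if_pos (by omega), if_pos (by omega), if_pos (by omega)]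
    have e1 : 2*(n+2+j) - (n+2) = (n+2*j+1)+1 := by omega
    have e2 : (n+2+j : ℕ) - (n+2) = j := by omega
    have e3 : 2*(n+2+j) - (n+1) = ((n+2*j+1)+1)+1 := by omega
    have e4 : (n+2+j : ℕ) - (n+1) = j+1 := by omega
    have e5 : 2*((n+2+j)-1) - n = (n+2*j+1)+1 := by omega
    have e6 : ((n+2+j)-1 : ℕ) - n = j+1 := by omega
    rw [e1, e2, e3, e4, e5, e6]
    have g1 : ((n+2+j : ℕ):ℝ) + μ + 1 = ((((n+2+j)-1 : ℕ):ℝ) + μ + 1) + 1 := by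
      have : ((n+2+j)-1 : ℕ) = n+1+j := by omega
      rw [this]; push_cast; ring
    have g2 : 2*μ + ((n+2 : ℕ):ℝ) = ((2*μ + ((n : ℕ):ℝ)) + 1) + 1 := by push_cast; ring
    have g3 : 2*μ + ((n+1 : ℕ):ℝ) = (2*μ + ((n : ℕ):ℝ)) + 1 := by push_cast; ring
    have hpos1 : (0:ℝ) < (((n+2+j)-1 : ℕ):ℝ) + μ + 1 := by positivity
    rw [g1, Real.Gamma_add_one hpos1.ne', g2, g3,
      Real.Gamma_add_one (by positivity), Real.Gamma_add_one (by positivity)]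
    rw [Nat.factorial_succ ((n+2*j+1)+1), Nat.factorial_succ (n+2*j+1),
      Nat.factorial_succ (n+1), Nat.factorial_succ n, Nat.factorial_succ j]
    have hΓq : Real.Gamma ((((n+2+j)-1 : ℕ):ℝ) + μ + 1) ≠ 0 :=
      (Real.Gamma_pos_of_pos hpos1).ne'
    have h1 : ((n+2+j)-1 : ℕ) = n+1+j := by omega
    rw [h1] at hΓq ⊢
    push_cast
    field_simp
    ring
  · rcases le_or_gt (n+1) q with h2 | h2
    · obtain rfl : q = n+1 := by omega
      rw [Rv, Rv, Rv, if_neg (by omega), if_pos (by omega), if_pos (by omega)]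
      have e1 : 2*(n+1) - (n+1) = n+1 := by omega
      have e2 : (n+1 : ℕ) - (n+1) = 0 := by omega
      have e3 : 2*((n+1)-1) - n = n := by omega
      have e4 : ((n+1)-1 : ℕ) - n = 0 := by omega
      rw [e1, e2, e3, e4]
      have g1 : ((n+1 : ℕ):ℝ) + μ + 1 = ((((n+1)-1 : ℕ):ℝ) + μ + 1) + 1 := by
        have : ((n+1)-1 : ℕ) = n := by omega
        rw [this]; push_cast; ring
      have g3 : 2*μ + ((n+1 : ℕ):ℝ) = (2*μ + ((n : ℕ):ℝ)) + 1 := by push_cast; ring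
      have : ((n+1)-1 : ℕ) = n := by omega
      rw [g1, this, Real.Gamma_add_one (by positivity), g3,
        Real.Gamma_add_one (by positivity), Nat.factorial_succ n, Nat.factorial_zero]
      have hΓq : Real.Gamma (((n : ℕ):ℝ) + μ + 1) ≠ 0 :=
        (Real.Gamma_pos_of_pos (by positivity)).ne'
      push_cast
      field_simp
      ring
    · rw [Rv, Rv, Rv, if_neg (by omega), if_neg (by omega), if_neg (by omega)]
      ring

lemma Hs_zero {μ : ℝ} (hμ : 0 < μ) (q : ℕ) : Hs μ 0 q = Rv μ 0 q := by
  unfold Hs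
  rw [Finset.sum_eq_single_of_mem 0 (Finset.mem_range.2 (by omega))]
  · rw [aa, bb, Rv, if_pos (by omega), if_pos (by omega), if_pos (by omega)]
    have g : μ + ((0:ℕ):ℝ) - ((0:ℕ):ℝ) = μ := by push_cast; ring
    have g2 : 2*μ + ((0:ℕ):ℝ) = 2*μ := by push_cast; ring
    rw [g, g2]
    have e1 : (0:ℕ) - 2*0 = 0 := by omega
    have e2 : q - 0 = q := by omega
    have e3 : 2*q - 0 = 2*q := by omega
    rw [e1, e2, e3, Nat.factorial_zero]
    have hΓq : Real.Gamma ((q:ℝ) + μ + 1) ≠ 0 :=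
      (Real.Gamma_pos_of_pos (by positivity)).ne'
    have hΓ2μ : Real.Gamma (2*μ) ≠ 0 := (Real.Gamma_pos_of_pos (by linarith)).ne'
    push_cast
    field_simp
  · intro b _ hb
    rw [aa, if_neg (by omega)]
    ring

lemma Hs_one {μ : ℝ} (hμ : 0 < μ) (q : ℕ) (hq : 1 ≤ q) : Hs μ 1 q = Rv μ 1 q := by
  obtain ⟨q', rfl⟩ : ∃ q', q = q'+1 := ⟨q-1, by omega⟩
  unfold Hs
  rw [Finset.sum_eq_single_of_mem 0 (Finset.mem_range.2 (by omega))]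
  · rw [aa, bb, Rv, if_pos (by omega), if_pos (by omega), if_pos (by omega)]
    have g : μ + ((1:ℕ):ℝ) - ((0:ℕ):ℝ) = μ + 1 := by push_cast; ring
    have g2 : 2*μ + ((1:ℕ):ℝ) = (2*μ) + 1 := by push_cast; ring
    rw [g, g2, Real.Gamma_add_one hμ.ne', Real.Gamma_add_one (by linarith : (2*μ:ℝ) ≠ 0)]
    have e1 : (1:ℕ) - 2*0 = 1 := by omega
    have e2 : q'+1 - 0 = q'+1 := by omega
    have e3 : 2*(q'+1) - 1 = 2*q'+1 := by omega
    have e4 : (q'+1) - 1 = q' := by omega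
    rw [e1, e2, e3, e4, Nat.factorial_zero, Nat.factorial_one]
    have h2q : (2*(q'+1)) = (2*q'+1)+1 := by omega
    rw [h2q, Nat.factorial_succ (2*q'+1), Nat.factorial_succ q']
    have hΓq : Real.Gamma (((q'+1 : ℕ):ℝ) + μ + 1) ≠ 0 :=
      (Real.Gamma_pos_of_pos (by positivity)).ne'
    have hΓ2μ : Real.Gamma (2*μ) ≠ 0 := (Real.Gamma_pos_of_pos (by linarith)).ne'
    push_cast
    field_simp
    ring
  · intro b _ hb
    rw [aa, if_neg (by omega)]
    ring

lemma Hs_eq_Rv {μ : ℝ} (hμ : 0 < μ) : ∀ n q : ℕ, n ≤ 2*q → Hs μ n q = Rv μ n q := by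
  intro n
  induction n using Nat.strong_induction_on with
  | _ n ih =>
    match n with
    | 0 => exact fun q _ => Hs_zero hμ q
    | 1 => exact fun q hq => Hs_one hμ q (by omega)
    | (n+2) =>
      intro q hq
      have hq1 : 1 ≤ q := by omega
      have e1 := ih (n+1) (by omega) q (by omega)
      have e2 := ih n (by omega) (q-1) (by omega)
      have r1 := Hs_rec hμ n q hq1
      have r2 := Rv_rec hμ n q hq1
      have hne : ((n:ℝ)+2) ≠ 0 := by positivity
      apply mul_left_cancel₀ hne
      rw [r1, r2, e1, e2]

lemma geg_cont (μ : ℝ) (n : ℕ) : Continuous (fun θ => gegenbauerC μ n (Real.cos θ)) := by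
  unfold gegenbauerC
  fun_prop

lemma sin_rpow_cont {μ : ℝ} (hμ : 0 < μ) : Continuous (fun θ => Real.sin θ ^ (2*μ)) := by
  apply Real.continuous_sin.rpow_const
  intro θ
  right
  linarith

lemma geg_bound (μ : ℝ) (n : ℕ) : ∃ C : ℝ, 0 ≤ C ∧
    ∀ y : ℝ, |y| ≤ 1 → |gegenbauerC μ n y| ≤ C := by
  refine ⟨∑ m ∈ Finset.range (n/2+1),
    |1 / Real.Gamma μ * ((-1:ℝ)^m * Real.Gamma (μ + n - m)
      / (m.factorial * ((n - 2*m).factorial)))| * 2^(n-2*m), ?_, ?_⟩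
  · apply Finset.sum_nonneg
    intro m _
    positivity
  · intro y hy
    rw [gegenbauerC, Finset.mul_sum]
    refine (Finset.abs_sum_le_sum_abs _ _).trans (Finset.sum_le_sum ?_)
    intro m _
    have h1 : |1 / Real.Gamma μ * ((-1:ℝ)^m * Real.Gamma (μ + ↑n - ↑m)
          / (↑m.factorial * ↑(n - 2*m).factorial) * (2*y)^(n-2*m))|
        = |1 / Real.Gamma μ * ((-1:ℝ)^m * Real.Gamma (μ + ↑n - ↑m)
          / (↑m.factorial * ↑(n - 2*m).factorial))| * |2*y|^(n-2*m) := by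
      rw [← abs_pow, ← abs_mul]
      ring_nf
    rw [h1]
    apply mul_le_mul_of_nonneg_left _ (abs_nonneg _)
    apply pow_le_pow_left₀ (abs_nonneg _)
    rw [abs_mul]
    norm_num
    linarith [hy]

lemma integral_fk {μ : ℝ} (hμ : 0 < μ) (n k : ℕ) (x : ℝ) :
    (∫ θ in Set.Ioo (0:ℝ) π,
      (-x)^k / k.factorial * Real.cos θ ^ k * gegenbauerC μ n (Real.cos θ)
        * Real.sin θ ^ (2*μ))
    = (-x)^k / k.factorial / Real.Gamma μ
        * ∑ m ∈ Finset.range (n/2+1),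
            ((-1:ℝ)^m * Real.Gamma (μ + n - m) / (m.factorial * ((n - 2*m).factorial : ℝ)))
              * 2^(n-2*m)
              * ∫ θ in Set.Ioo (0:ℝ) π, Real.cos θ ^ (k+n-2*m) * Real.sin θ ^ (2*μ) := by
  have hptwise : ∀ θ ∈ Set.Ioo (0:ℝ) π,
      (-x)^k / k.factorial * Real.cos θ ^ k * gegenbauerC μ n (Real.cos θ)
        * Real.sin θ ^ (2*μ)
      = ∑ m ∈ Finset.range (n/2+1),
          ((-x)^k / k.factorial / Real.Gamma μ
            * (((-1:ℝ)^m * Real.Gamma (μ + n - m) / (m.factorial * ((n - 2*m).factorial : ℝ)))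
              * 2^(n-2*m)))
            * (Real.cos θ ^ (k+n-2*m) * Real.sin θ ^ (2*μ)) := by
    intro θ _
    rw [gegenbauerC, Finset.mul_sum, Finset.mul_sum, Finset.sum_mul]
    apply Finset.sum_congr rfl
    intro m hm
    have h2m : 2*m ≤ n := by
      have := Finset.mem_range.1 hm
      omega
    have hee : k + (n - 2*m) = k + n - 2*m := by omega
    rw [mul_pow, ← hee, pow_add]
    ring
  rw [MeasureTheory.setIntegral_congr_fun measurableSet_Ioo hptwise,
    MeasureTheory.integral_finset_sum _
      (fun m _ => ((intOn_theta hμ (k+n-2*m)).const_mul _)),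
    Finset.mul_sum]
  apply Finset.sum_congr rfl
  intro m _
  rw [MeasureTheory.integral_const_mul]
  ring

lemma integral_fk_odd {μ : ℝ} (hμ : 0 < μ) {n k : ℕ} (x : ℝ) (hodd : Odd (k+n)) :
    (∫ θ in Set.Ioo (0:ℝ) π,
      (-x)^k / k.factorial * Real.cos θ ^ k * gegenbauerC μ n (Real.cos θ)
        * Real.sin θ ^ (2*μ)) = 0 := by
  rw [integral_fk hμ n k x, Finset.sum_eq_zero, mul_zero]
  intro m hm
  have h2m : 2*m ≤ n := by
    have := Finset.mem_range.1 hm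
    omega
  have hodd2 : Odd (k+n-2*m) := by
    rcases hodd with ⟨t, ht⟩
    exact ⟨t - m, by omega⟩
  rw [mom_theta hμ, mom_odd hμ hodd2, mul_zero]

lemma integral_fk_even {μ : ℝ} (hμ : 0 < μ) {n k q : ℕ} (x : ℝ) (hq : k + n = 2*q) :
    (∫ θ in Set.Ioo (0:ℝ) π,
      (-x)^k / k.factorial * Real.cos θ ^ k * gegenbauerC μ n (Real.cos θ)
        * Real.sin θ ^ (2*μ))
    = (-x)^k / k.factorial / Real.Gamma μ
        * (Real.sqrt π * Real.Gamma (μ+1/2) * 2^n / 4^q) * Rv μ n q := by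
  rw [integral_fk hμ n k x]
  have key : ∀ m ∈ Finset.range (n/2+1),
      ((-1:ℝ)^m * Real.Gamma (μ + n - m) / (m.factorial * ((n - 2*m).factorial : ℝ)))
        * 2^(n-2*m)
        * ∫ θ in Set.Ioo (0:ℝ) π, Real.cos θ ^ (k+n-2*m) * Real.sin θ ^ (2*μ)
      = (Real.sqrt π * Real.Gamma (μ+1/2) * 2^n / 4^q) * (aa μ n m * bb μ q m) := by
    intro m hm
    have h2m : 2*m ≤ n := by
      have := Finset.mem_range.1 hm
      omega
    have hmq : m ≤ q := by omega
    have he : k + n - 2*m = 2*(q-m) := by omega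
    rw [he, mom_theta hμ, mom_even hμ (q-m), _root_.Gamma_nat_add_half (q-m)]
    rw [aa, bb, if_pos h2m, if_pos hmq]
    have h4q : ((4:ℝ)^q) ≠ 0 := by positivity
    have h4qm : ((4:ℝ)^(q-m)) ≠ 0 := by positivity
    have hpow2 : (2:ℝ)^(n-2*m) / 4^(q-m) = 2^n / (4:ℝ)^q := by
      rw [div_eq_div_iff h4qm h4q,
        show (4:ℝ) = 2^2 from by norm_num, ← pow_mul, ← pow_mul, ← pow_add, ← pow_add]
      congr 1
      omega
    linear_combination ((-1:ℝ)^m * Real.Gamma (μ+(n:ℝ)-(m:ℝ))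
        / ((m.factorial : ℝ) * ((n-2*m).factorial : ℝ))
        * (Real.sqrt π * ((2*(q-m)).factorial : ℝ) * Real.Gamma (μ+1/2)
          / (((q-m).factorial : ℝ) * Real.Gamma (((q-m : ℕ):ℝ)+μ+1)))) * hpow2
  rw [Finset.sum_congr rfl key, ← Finset.mul_sum]
  have hsub : Finset.range (n/2+1) ⊆ Finset.range (q+1) := by
    apply Finset.range_subset_range.2
    omega
  rw [Finset.sum_subset hsub (fun m hmq hm => by
    have hgt : ¬ (2*m ≤ n) := by
      rw [Finset.mem_range] at hm hmq
      omega
    rw [aa, if_neg hgt, zero_mul])]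
  have hHs : ∑ m ∈ Finset.range (q+1), aa μ n m * bb μ q m = Hs μ n q := rfl
  rw [hHs, Hs_eq_Rv hμ n q (by omega)]
  ring


/-- Gegenbauer integral formula. -/
theorem gegenbauer_integral (μ : ℝ) (hμ : 0 < μ) (n : ℕ) (hn : 1 ≤ n) (x : ℝ) (hx : 0 < x) :
    (∫ θ in (0 : ℝ)..Real.pi,
        Real.exp (-(x * Real.cos θ)) * gegenbauerC μ n (Real.cos θ)
          * Real.sin θ ^ (2 * μ))
      = 2 ^ μ * (-1 : ℝ) ^ n * Real.sqrt Real.pi * Real.Gamma (μ + 1 / 2)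
          * Real.Gamma (2 * μ + n) / ((n.factorial : ℝ) * Real.Gamma (2 * μ))
          * besselI (μ + n) x / x ^ μ := by
  obtain ⟨C, hC0, hCb⟩ := geg_bound μ n
  set f : ℕ → ℝ → ℝ := fun k θ =>
    (-x)^k / k.factorial * Real.cos θ ^ k * gegenbauerC μ n (Real.cos θ)
      * Real.sin θ ^ (2*μ) with hf
  have hptw : ∀ θ : ℝ,
      Real.exp (-(x * Real.cos θ)) * gegenbauerC μ n (Real.cos θ) * Real.sin θ ^ (2*μ)
        = ∑' k : ℕ, f k θ := by
    intro θ
    rw [Real.exp_eq_exp_ℝ, NormedSpace.exp_eq_tsum_div]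
    simp only
    rw [← tsum_mul_right, ← tsum_mul_right]
    apply tsum_congr
    intro k
    rw [hf]
    simp only
    rw [show -(x * Real.cos θ) = (-x) * Real.cos θ by ring, mul_pow]
    ring
  rw [intervalIntegral.integral_of_le Real.pi_pos.le,
    MeasureTheory.integral_Ioc_eq_integral_Ioo]
  simp only [hptw]
  have hmeas : ∀ k : ℕ, AEStronglyMeasurable (f k) (volume.restrict (Set.Ioo 0 π)) := by
    intro k
    exact (((continuous_const.mul (Real.continuous_cos.pow k)).mul (geg_cont μ n)).mul
      (sin_rpow_cont hμ)).aestronglyMeasurable.restrict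
  have hbound : ∀ (k : ℕ) (θ : ℝ), θ ∈ Set.Ioo (0:ℝ) π →
      ‖f k θ‖ ≤ x^k / k.factorial * C := by
    intro k θ hθ
    have hs0 : 0 ≤ Real.sin θ := Real.sin_nonneg_of_nonneg_of_le_pi hθ.1.le hθ.2.le
    have hsin : |Real.sin θ ^ (2*μ)| ≤ 1 := by
      rw [abs_of_nonneg (Real.rpow_nonneg hs0 _)]
      exact Real.rpow_le_one hs0 (Real.sin_le_one θ) (by linarith)
    have hcos : |Real.cos θ ^ k| ≤ 1 := by
      rw [abs_pow]
      exact pow_le_one₀ (abs_nonneg _) (Real.abs_cos_le_one θ)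
    have hgeg : |gegenbauerC μ n (Real.cos θ)| ≤ C := hCb _ (Real.abs_cos_le_one θ)
    have hxk : |(-x)^k / (k.factorial : ℝ)| = x^k / k.factorial := by
      rw [abs_div, abs_pow, abs_neg, abs_of_pos hx, abs_of_pos]
      positivity
    rw [hf]
    simp only [Real.norm_eq_abs]
    calc |(-x)^k / (k.factorial:ℝ) * Real.cos θ ^ k * gegenbauerC μ n (Real.cos θ)
          * Real.sin θ ^ (2*μ)|
        = |(-x)^k / (k.factorial:ℝ)| * |Real.cos θ ^ k| * |gegenbauerC μ n (Real.cos θ)|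
          * |Real.sin θ ^ (2*μ)| := by
          rw [abs_mul, abs_mul, abs_mul]
      _ ≤ (x^k / k.factorial) * 1 * C * 1 := by
          rw [hxk]
          have h1 : (0:ℝ) ≤ x^k / k.factorial := by positivity
          apply mul_le_mul _ hsin _ (by positivity)
          · apply mul_le_mul _ hgeg (abs_nonneg _) (by positivity)
            exact mul_le_mul_of_nonneg_left hcos h1
          · exact abs_nonneg _
      _ = x^k / k.factorial * C := by ring
  have hlint : ∑' k : ℕ, ∫⁻ θ in Set.Ioo (0:ℝ) π, ‖f k θ‖₊ ≠ ⊤ := by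
    have hle : ∀ k : ℕ, ∫⁻ θ in Set.Ioo (0:ℝ) π, ‖f k θ‖₊
        ≤ ENNReal.ofReal (x^k / k.factorial * C * π) := by
      intro k
      calc ∫⁻ θ in Set.Ioo (0:ℝ) π, ‖f k θ‖₊
          ≤ ∫⁻ _ in Set.Ioo (0:ℝ) π, ENNReal.ofReal (x^k / k.factorial * C) := by
            apply MeasureTheory.setLIntegral_mono measurable_const
            intro θ hθ
            rw [← ENNReal.ofReal_coe_nnreal, coe_nnnorm]
            exact ENNReal.ofReal_le_ofReal (hbound k θ hθ)
        _ = ENNReal.ofReal (x^k / k.factorial * C) * ENNReal.ofReal π := by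
            rw [MeasureTheory.setLIntegral_const, Real.volume_Ioo, sub_zero]
        _ = ENNReal.ofReal (x^k / k.factorial * C * π) := by
            rw [← ENNReal.ofReal_mul (by positivity)]
    have hsummable : Summable (fun k : ℕ => x^k / k.factorial * (C * π)) :=
      (Real.summable_pow_div_factorial x).mul_right _
    have heq : ∑' k : ℕ, ENNReal.ofReal (x^k / k.factorial * C * π)
        = ENNReal.ofReal (∑' k : ℕ, x^k / k.factorial * (C * π)) := by
      rw [ENNReal.ofReal_tsum_of_nonneg (fun k => by positivity) hsummable]
      apply tsum_congr
      intro k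
      congr 1
      ring
    apply ne_top_of_le_ne_top _ (ENNReal.tsum_le_tsum hle)
    rw [heq]
    exact ENNReal.ofReal_ne_top
  rw [MeasureTheory.integral_tsum hmeas hlint]
  have hinj : Function.Injective (fun j : ℕ => n + 2*j) := by
    intro a b h
    simp only at h
    omega
  have hsupp : Function.support (fun k => ∫ θ in Set.Ioo (0:ℝ) π, f k θ)
      ⊆ Set.range (fun j : ℕ => n + 2*j) := by
    intro k hk
    rw [Function.mem_support] at hk
    by_contra hnr
    apply hk
    rcases Nat.even_or_odd (k+n) with he | ho
    · obtain ⟨t, ht⟩ := he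
      have hq' : k + n = 2*t := by omega
      have hkn : k < n := by
        by_contra hge
        push_neg at hge
        exact hnr ⟨(k-n)/2, by simp only; omega⟩
      rw [hf]
      simp only
      rw [integral_fk_even hμ x hq', Rv, if_neg (by omega), mul_zero]
    · rw [hf]
      simp only
      exact integral_fk_odd hμ x ho
  rw [← Function.Injective.tsum_eq hinj hsupp]
  have hterm : ∀ j : ℕ, (∫ θ in Set.Ioo (0:ℝ) π, f (n + 2*j) θ)
      = ((-1:ℝ)^n * Real.sqrt π * Real.Gamma (μ+1/2) * Real.Gamma (2*μ+n)
          / (n.factorial * Real.Gamma (2*μ)))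
        * ((x/2)^(n+2*j) / (j.factorial * Real.Gamma (((n+j : ℕ):ℝ) + μ + 1))) := by
    intro j
    rw [hf]
    simp only
    rw [integral_fk_even hμ x (show (n+2*j) + n = 2*(n+j) from by omega),
      Rv, if_pos (by omega), show 2*(n+j) - n = n+2*j from by omega,
      show (n+j) - n = j from by omega]
    have h1 : (-x)^(n+2*j) = (-1:ℝ)^n * x^(n+2*j) := by
      rw [neg_pow, pow_add, pow_mul]
      norm_num
    have h2 : ((4:ℝ))^(n+j) = 2^(n+2*j) * 2^n := by
      rw [show (4:ℝ) = 2^2 from by norm_num, ← pow_mul, ← pow_add]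
      congr 1
      omega
    have h3 : ((x/2:ℝ))^(n+2*j) = x^(n+2*j) / 2^(n+2*j) := div_pow x 2 _
    have hΓμ : Real.Gamma μ ≠ 0 := (Real.Gamma_pos_of_pos hμ).ne'
    have hΓ2μ : Real.Gamma (2*μ) ≠ 0 := (Real.Gamma_pos_of_pos (by linarith)).ne'
    have hΓq : Real.Gamma (((n+j : ℕ):ℝ) + μ + 1) ≠ 0 :=
      (Real.Gamma_pos_of_pos (by positivity)).ne'
    have h2p : ((2:ℝ))^(n+2*j) ≠ 0 := by positivity
    rw [h1, h2, h3]
    field_simp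
  rw [tsum_congr hterm, tsum_mul_left]
  have hbI : besselI (μ + n) x
      = (x/2) ^ (μ:ℝ)
        * ∑' j : ℕ, ((x/2)^(n+2*j) / (j.factorial * Real.Gamma (((n+j : ℕ):ℝ) + μ + 1))) := by
    rw [besselI, ← tsum_mul_left]
    apply tsum_congr
    intro j
    have he : 2 * (j:ℝ) + (μ + n) = ((n + 2*j : ℕ):ℝ) + μ := by push_cast; ring
    rw [he, Real.rpow_add (by positivity : (0:ℝ) < x/2), Real.rpow_natCast]
    have hg : (j:ℝ) + (μ + n) + 1 = ((n+j : ℕ):ℝ) + μ + 1 := by push_cast; ring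
    rw [hg]
    ring
  rw [hbI]
  have h2x : (2:ℝ)^μ * (x/2)^(μ:ℝ) = x^μ := by
    rw [← Real.mul_rpow (by norm_num) (by positivity)]
    congr 1
    ring
  have hxne : (x:ℝ)^μ ≠ 0 := (Real.rpow_pos_of_pos hx μ).ne'
  set S := ∑' j : ℕ, ((x/2)^(n+2*j) / (j.factorial * Real.Gamma (((n+j : ℕ):ℝ) + μ + 1)))
  rw [eq_div_iff hxne]
  linear_combination (-(((-1:ℝ))^n * Real.sqrt π * Real.Gamma (μ+1/2) * Real.Gamma (2*μ+(n:ℝ))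
    / ((n.factorial : ℝ) * Real.Gamma (2*μ)) * S)) * h2x
end

section
/- Let ν ≥ 0 be a real number. For every integer n ≥ 1 and every y > 0, ((ν+n) Γ(2ν+n)/n!) · I_{ν+n}(y)/K_{ν+n}(y) ≤ (y^{2ν} Γ(2ν+1) / (2^ν Γ(ν+1)²)) · (y^{2n} / (2^n n! (n−1)!)) · e^{2y}. -/
open MeasureTheory ProbabilityTheory Real Filter Set
open scoped ENNReal NNReal Topology

lemma fact_two_mul_le (k : ℕ) : (((2*k).factorial : ℝ)) ≤ 4^k * ((k.factorial:ℝ))^2 := by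
  induction k with
  | zero => norm_num
  | succ k ih =>
    have h1 : 2*(k+1) = (2*k+1)+1 := by ring
    rw [h1, Nat.factorial_succ, Nat.factorial_succ, Nat.factorial_succ]
    push_cast
    have hf : (0:ℝ) < (k.factorial : ℝ) := by positivity
    have h4 : (0:ℝ) < (4:ℝ)^k := by positivity
    have key1 : (2*(k:ℝ)+2)*(2*k+1) * ((2*k).factorial:ℝ)
        ≤ (2*(k:ℝ)+2)*(2*k+1) * (4^k * ((k.factorial:ℝ))^2) :=
      mul_le_mul_of_nonneg_left ih (by positivity)
    have key2 : (2*(k:ℝ)+2)*(2*k+1) * (4^k * ((k.factorial:ℝ))^2)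
        ≤ 4*((k:ℝ)+1)^2 * (4^k * ((k.factorial:ℝ))^2) := by
      have hpos : (0:ℝ) < 4^k * ((k.factorial:ℝ))^2 := by positivity
      nlinarith [mul_nonneg (mul_nonneg (by positivity : (0:ℝ) ≤ 2*(k:ℝ)+2) hpos.le) hpos.le,
        mul_le_mul_of_nonneg_right (show (2*(k:ℝ)+2)*(2*k+1) ≤ 4*((k:ℝ)+1)^2 by nlinarith) hpos.le]
    calc (2*(k:ℝ)+1+1)*((2*(k:ℝ)+1) * ((2*k).factorial:ℝ))
        = (2*(k:ℝ)+2)*(2*k+1) * ((2*k).factorial:ℝ) := by ring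
      _ ≤ 4*((k:ℝ)+1)^2 * (4^k * ((k.factorial:ℝ))^2) := le_trans key1 key2
      _ = 4^(k+1) * (((k:ℝ)+1)*(k.factorial:ℝ))^2 := by ring

lemma fact_mul_Gamma_le (μ : ℝ) (hμ : 0 ≤ μ) (k : ℕ) :
    (k.factorial : ℝ) * Real.Gamma (μ+1) ≤ Real.Gamma ((k:ℝ) + μ + 1) := by
  induction k with
  | zero => simp
  | succ k ih =>
    have hpos : (0:ℝ) < (k:ℝ) + μ + 1 := by positivity
    have hG : Real.Gamma (((k+1:ℕ):ℝ) + μ + 1) = ((k:ℝ)+μ+1) * Real.Gamma ((k:ℝ)+μ+1) := by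
      have h2 : ((k+1:ℕ):ℝ) + μ + 1 = ((k:ℝ)+μ+1) + 1 := by push_cast; ring
      rw [h2, Real.Gamma_add_one hpos.ne']
    rw [hG, Nat.factorial_succ]
    push_cast
    have hΓpos := Real.Gamma_pos_of_pos hpos
    have hΓ1 : 0 < Real.Gamma (μ+1) := Real.Gamma_pos_of_pos (by linarith)
    have hk1 : (0:ℝ) ≤ (k:ℝ)+1 := by positivity
    nlinarith [mul_le_mul_of_nonneg_left ih hk1, mul_nonneg hμ hΓpos.le]

lemma lemE (ν : ℝ) (hν : 0 ≤ ν) (n : ℕ) (hn : 1 ≤ n) :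
    2 * Real.Gamma (2*ν+n) * Real.Gamma (ν+1)^2 * ((n-1).factorial : ℝ)
      ≤ 2^ν * 2^n * Real.Gamma (2*ν+1) * Real.Gamma (ν+n)^2 := by
  induction n with
  | zero => omega
  | succ n ih =>
    have h2ν : (1:ℝ) ≤ 2^ν := by
      calc (1:ℝ) = 1^ν := (Real.one_rpow ν).symm
      _ ≤ 2^ν := Real.rpow_le_rpow zero_le_one one_le_two hν
    rcases Nat.eq_zero_or_pos n with rfl | hn1
    · have hΓ1 : 0 < Real.Gamma (2*ν+1) := Real.Gamma_pos_of_pos (by linarith)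
      have hΓ2 : 0 < Real.Gamma (ν+1) := Real.Gamma_pos_of_pos (by linarith)
      push_cast
      simp only [Nat.factorial]
      push_cast
      nlinarith [mul_le_mul_of_nonneg_right h2ν
        (show (0:ℝ) ≤ 2*Real.Gamma (2*ν+1)*Real.Gamma (ν+1)^2 by positivity)]
    · have ih' := ih hn1
      have hc1 : ((n+1:ℕ):ℝ) = (n:ℝ)+1 := by push_cast; ring
      have hG1 : Real.Gamma (2*ν+((n+1:ℕ):ℝ)) = (2*ν+n) * Real.Gamma (2*ν+n) := by
        rw [hc1, show 2*ν+((n:ℝ)+1) = (2*ν+n)+1 by ring,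
          Real.Gamma_add_one (by positivity : (2*ν+(n:ℝ)) ≠ 0)]
      have hG2 : Real.Gamma (ν+((n+1:ℕ):ℝ)) = (ν+n) * Real.Gamma (ν+n) := by
        rw [hc1, show ν+((n:ℝ)+1) = (ν+n)+1 by ring,
          Real.Gamma_add_one (by positivity : (ν+(n:ℝ)) ≠ 0)]
      have hfac : ((n.factorial : ℝ)) = n * (((n-1).factorial:ℝ)) := by
        conv_lhs => rw [show n = (n-1)+1 by omega]
        rw [Nat.factorial_succ]
        push_cast [show n-1+1 = n by omega]
        ring
      have hΓ1 : 0 < Real.Gamma (2*ν+1) := Real.Gamma_pos_of_pos (by linarith)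
      have hΓa : 0 < Real.Gamma (2*ν+n) := Real.Gamma_pos_of_pos (by positivity)
      have hΓb : 0 < Real.Gamma (ν+1) := Real.Gamma_pos_of_pos (by linarith)
      have hΓc : 0 < Real.Gamma (ν+n) := Real.Gamma_pos_of_pos (by positivity)
      have h2ν0 : (0:ℝ) < 2^ν := by linarith
      rw [show n+1-1 = n from rfl, hG1, hG2, hfac]
      calc 2 * ((2*ν+n) * Real.Gamma (2*ν+n)) * Real.Gamma (ν+1)^2 * ((n:ℝ) * ((n-1).factorial:ℝ))
          = ((2*ν+n)*n) * (2 * Real.Gamma (2*ν+n) * Real.Gamma (ν+1)^2 * ((n-1).factorial:ℝ)) := by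
            ring
        _ ≤ ((2*ν+n)*n) * (2^ν * 2^n * Real.Gamma (2*ν+1) * Real.Gamma (ν+n)^2) :=
            mul_le_mul_of_nonneg_left ih' (by positivity)
        _ ≤ (2*(ν+n)^2) * (2^ν * 2^n * Real.Gamma (2*ν+1) * Real.Gamma (ν+n)^2) := by
            have hnn : (1:ℝ) ≤ (n:ℝ) := by exact_mod_cast hn1
            refine mul_le_mul_of_nonneg_right (by nlinarith) (by positivity)
        _ = 2^ν * 2^(n+1) * Real.Gamma (2*ν+1) * ((ν+n) * Real.Gamma (ν+n))^2 := by ring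

lemma exp_eq_tsum' (y : ℝ) : Real.exp y = ∑' n : ℕ, y^n / (n.factorial : ℝ) := by
  rw [Real.exp_eq_exp_ℝ, NormedSpace.exp_eq_tsum_div]

lemma tsum_even_le_exp (y : ℝ) (hy : 0 ≤ y) :
    ∑' k : ℕ, y^(2*k) / (((2*k).factorial : ℝ)) ≤ Real.exp y := by
  rw [exp_eq_tsum' y]
  have hinj : Function.Injective (fun k : ℕ => 2*k) := fun a b h => by dsimp only at h; omega
  exact Summable.tsum_le_tsum_of_inj (fun k => 2*k) hinj
    (fun c _ => by positivity) (fun k => le_rfl)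
    ((Real.summable_pow_div_factorial y).comp_injective hinj)
    (Real.summable_pow_div_factorial y)

lemma besselI_le (μ y : ℝ) (hμ : 0 ≤ μ) (hy : 0 < y) :
    besselI μ y ≤ (y/2)^μ / Real.Gamma (μ+1) * Real.exp y := by
  have hΓ1 : 0 < Real.Gamma (μ+1) := Real.Gamma_pos_of_pos (by linarith)
  set c : ℝ := (y/2)^μ / Real.Gamma (μ+1) with hc
  have hc0 : 0 < c := by
    apply div_pos (Real.rpow_pos_of_pos (by linarith) μ) hΓ1
  have hterm : ∀ k : ℕ, (y/2) ^ (2 * (k : ℝ) + μ) / ((k.factorial : ℝ) * Real.Gamma ((k:ℝ) + μ + 1))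
      ≤ c * (y^(2*k) / (((2*k).factorial : ℝ))) := by
    intro k
    have hy2 : (0:ℝ) < y/2 := by linarith
    have h1 : (y/2:ℝ)^(2*(k:ℝ)+μ) = (y/2)^(2*k:ℕ) * (y/2)^μ := by
      rw [← Real.rpow_natCast (y/2) (2*k), ← Real.rpow_add hy2]
      push_cast; ring_nf
    rw [h1]
    have e1 : ((y:ℝ)/2)^(2*k:ℕ) = y^(2*k)/4^k := by
      rw [div_pow]; congr 1; rw [pow_mul]; norm_num
    rw [e1, div_mul_eq_mul_div, div_div]
    have e2 : c * (y^(2*k)/(((2*k).factorial:ℝ)))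
        = (y^(2*k) * (y/2)^μ) / (Real.Gamma (μ+1) * (((2*k).factorial:ℝ))) := by
      rw [hc]; ring
    rw [e2]
    have hden : Real.Gamma (μ+1) * (((2*k).factorial : ℝ))
        ≤ 4^k * ((k.factorial : ℝ) * Real.Gamma ((k:ℝ)+μ+1)) := by
      have h2 := fact_two_mul_le k
      have h3 := fact_mul_Gamma_le μ hμ k
      have hf : (0:ℝ) < (k.factorial : ℝ) := by positivity
      have h4 : (0:ℝ) < (4:ℝ)^k := by positivity
      calc Real.Gamma (μ+1) * (((2*k).factorial : ℝ))
          ≤ Real.Gamma (μ+1) * (4^k * ((k.factorial:ℝ))^2) :=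
            mul_le_mul_of_nonneg_left h2 hΓ1.le
        _ = 4^k * ((k.factorial:ℝ) * ((k.factorial:ℝ) * Real.Gamma (μ+1))) := by ring
        _ ≤ 4^k * ((k.factorial:ℝ) * Real.Gamma ((k:ℝ)+μ+1)) := by
            exact mul_le_mul_of_nonneg_left (mul_le_mul_of_nonneg_left h3 hf.le) h4.le
    exact div_le_div₀ (by positivity) le_rfl (by positivity) hden
  rw [besselI]
  by_cases hs : Summable fun k : ℕ =>
      (y/2) ^ (2 * (k : ℝ) + μ) / ((k.factorial : ℝ) * Real.Gamma ((k:ℝ) + μ + 1))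
  · have hinj : Function.Injective (fun k : ℕ => 2*k) := fun a b h => by dsimp only at h; omega
    have hsg : Summable fun k : ℕ => c * (y^(2*k) / (((2*k).factorial : ℝ))) :=
      ((Real.summable_pow_div_factorial y).comp_injective hinj).mul_left c
    calc ∑' k : ℕ, (y/2) ^ (2 * (k : ℝ) + μ) / ((k.factorial : ℝ) * Real.Gamma ((k:ℝ) + μ + 1))
        ≤ ∑' k : ℕ, c * (y^(2*k) / (((2*k).factorial : ℝ))) := Summable.tsum_le_tsum hterm hs hsg
      _ = c * ∑' k : ℕ, y^(2*k) / (((2*k).factorial : ℝ)) := tsum_mul_left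
      _ ≤ c * Real.exp y := mul_le_mul_of_nonneg_left (tsum_even_le_exp y hy.le) hc0.le
  · rw [tsum_eq_zero_of_not_summable hs]
    positivity
lemma besselK_ge (μ y : ℝ) (hμ : 1 ≤ μ) (hy : 0 < y) :
    Real.Gamma μ * (2/y)^μ * Real.exp (-y) / 2 ≤ besselK μ y := by
  have hμ0 : 0 < μ := by linarith
  set a : ℝ := y/2 with ha
  have ha0 : 0 < a := by positivity
  set g : ℝ → ℝ := fun u => u ^ (μ-1) * Real.exp (-(a*u)) with hg
  -- integrability of g on Ioi 0
  have hg_int : IntegrableOn g (Set.Ioi (0:ℝ)) := by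
    have h := integrableOn_rpow_mul_exp_neg_mul_rpow
      (show (-1:ℝ) < μ-1 by linarith) zero_lt_one ha0
    refine h.congr_fun (fun x hx => ?_) measurableSet_Ioi
    beta_reduce
    rw [Real.rpow_one, neg_mul]
  -- value of the full integral
  have hGint : ∫ u in Set.Ioi (0:ℝ), g u = (1/a)^μ * Real.Gamma μ := by
    have := Real.integral_rpow_mul_exp_neg_mul_Ioi hμ0 ha0
    simpa [hg, sub_add_cancel] using this
  -- shift: ∫_{Ioi 1} g = ∫_{Ioi 0} g (w+1)
  have hadd_deriv : ∀ x ∈ Set.Ioi (0:ℝ), HasDerivWithinAt (fun w : ℝ => w + 1) ((fun _ : ℝ => (1:ℝ)) x) (Set.Ioi 0) x :=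
    fun x _ => ((hasDerivAt_id x).add_const 1).hasDerivWithinAt
  have hadd_inj : Set.InjOn (fun w : ℝ => w + 1) (Set.Ioi 0) :=
    (add_left_injective 1).injOn
  have himg1 : (fun w : ℝ => w + 1) '' Set.Ioi (0:ℝ) = Set.Ioi 1 := by
    rw [Set.image_add_const_Ioi]; norm_num
  have hshift : ∫ u in Set.Ioi (1:ℝ), g u = ∫ w in Set.Ioi (0:ℝ), g (w+1) := by
    rw [← himg1, integral_image_eq_integral_abs_deriv_smul measurableSet_Ioi hadd_deriv hadd_inj g]
    simp
  have hg1_int : IntegrableOn (fun w => g (w+1)) (Set.Ioi (0:ℝ)) := by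
    have := (integrableOn_image_iff_integrableOn_abs_deriv_smul measurableSet_Ioi
      hadd_deriv hadd_inj g).mp (by rw [himg1]; exact hg_int.mono_set (Set.Ioi_subset_Ioi zero_le_one))
    simpa using this
  have hshift_ge : Real.exp (-a) * ((1/a)^μ * Real.Gamma μ) ≤ ∫ u in Set.Ioi (1:ℝ), g u := by
    rw [hshift, ← hGint, ← integral_const_mul]
    refine setIntegral_mono_on (hg_int.const_mul _) hg1_int measurableSet_Ioi ?_
    intro w hw
    have hw0 : (0:ℝ) < w := hw
    have h1 : w ^ (μ-1) ≤ (w+1) ^ (μ-1) :=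
      Real.rpow_le_rpow hw0.le (by linarith) (by linarith)
    have h2 : Real.exp (-(a*(w+1))) = Real.exp (-a) * Real.exp (-(a*w)) := by
      rw [← Real.exp_add]; ring_nf
    simp only [hg]
    rw [h2]
    calc Real.exp (-a) * (w ^ (μ-1) * Real.exp (-(a*w)))
        ≤ Real.exp (-a) * ((w+1) ^ (μ-1) * Real.exp (-(a*w))) := by
          refine mul_le_mul_of_nonneg_left (mul_le_mul_of_nonneg_right h1 (Real.exp_pos _).le)
            (Real.exp_pos _).le
      _ = (w+1) ^ (μ-1) * (Real.exp (-a) * Real.exp (-(a*w))) := by ring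
  -- exp substitution
  have hexp_deriv : ∀ x ∈ Set.Ioi (0:ℝ), HasDerivWithinAt Real.exp (Real.exp x) (Set.Ioi 0) x :=
    fun x _ => (Real.hasDerivAt_exp x).hasDerivWithinAt
  have hexp_inj : Set.InjOn Real.exp (Set.Ioi 0) := Real.exp_injective.injOn
  have hexp_img : Real.exp '' Set.Ioi (0:ℝ) = Set.Ioi 1 := by
    ext u
    constructor
    · rintro ⟨t, ht, rfl⟩
      have : Real.exp 0 < Real.exp t := Real.exp_lt_exp.mpr ht
      simpa using this
    · intro hu
      exact ⟨Real.log u, Real.log_pos hu, Real.exp_log (by linarith [Set.mem_Ioi.mp hu])⟩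
  have hM_eq : ∀ t ∈ Set.Ioi (0:ℝ),
      |Real.exp t| • g (Real.exp t) = Real.exp (μ*t - a * Real.exp t) := by
    intro t _
    have hep : (0:ℝ) < Real.exp t := Real.exp_pos t
    simp only [hg, smul_eq_mul, abs_of_pos hep]
    rw [Real.rpow_def_of_pos hep, Real.log_exp, ← Real.exp_add, ← Real.exp_add]
    congr 1
    ring
  have hE : ∫ t in Set.Ioi (0:ℝ), Real.exp (μ*t - a * Real.exp t) = ∫ u in Set.Ioi (1:ℝ), g u := by
    rw [← hexp_img, integral_image_eq_integral_abs_deriv_smul measurableSet_Ioi hexp_deriv hexp_inj g]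
    exact setIntegral_congr_fun measurableSet_Ioi (fun t ht => (hM_eq t ht).symm)
  have hM_int : IntegrableOn (fun t => Real.exp (μ*t - a * Real.exp t)) (Set.Ioi (0:ℝ)) := by
    have h := (integrableOn_image_iff_integrableOn_abs_deriv_smul measurableSet_Ioi
      hexp_deriv hexp_inj g).mp (by rw [hexp_img]; exact hg_int.mono_set (Set.Ioi_subset_Ioi zero_le_one))
    exact h.congr_fun hM_eq measurableSet_Ioi
  -- bound the Bessel K integrand
  set F : ℝ → ℝ := fun t => Real.exp (-(y * Real.cosh t)) * Real.cosh (μ * t) with hF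
  have hF_le : ∀ t ∈ Set.Ioi (0:ℝ), F t ≤ Real.exp (μ*t - a * Real.exp t) := by
    intro t ht
    have ht0 : (0:ℝ) < t := ht
    have hcosh1 : Real.cosh (μ*t) ≤ Real.exp (μ*t) := by
      rw [Real.cosh_eq]
      have := Real.exp_le_exp.mpr (show -(μ*t) ≤ μ*t by nlinarith)
      linarith
    have hcosh2 : a * Real.exp t ≤ y * Real.cosh t := by
      rw [Real.cosh_eq, ha]
      have := (Real.exp_pos (-t)).le
      nlinarith
    have h1 : Real.exp (-(y * Real.cosh t)) ≤ Real.exp (-(a * Real.exp t)) :=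
      Real.exp_le_exp.mpr (by linarith)
    calc F t ≤ Real.exp (-(a * Real.exp t)) * Real.exp (μ*t) := by
          refine mul_le_mul h1 hcosh1 (Real.cosh_pos _).le (Real.exp_pos _).le
      _ = Real.exp (μ*t - a * Real.exp t) := by rw [← Real.exp_add]; ring_nf
  have hF_nonneg : ∀ t, 0 ≤ F t := fun t => by
    simp only [hF]; positivity
  have hF_cont : Continuous F := by
    simp only [hF]; fun_prop
  have hF_int : IntegrableOn F (Set.Ioi (0:ℝ)) := by
    refine Integrable.mono hM_int hF_cont.aestronglyMeasurable.restrict ?_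
    rw [ae_restrict_iff' measurableSet_Ioi]
    filter_upwards with t ht
    rw [Real.norm_eq_abs, Real.norm_eq_abs, abs_of_nonneg (hF_nonneg t),
      abs_of_nonneg (Real.exp_pos _).le]
    exact hF_le t ht
  -- lower bound for F
  have hF_ge : ∀ t ∈ Set.Ioi (0:ℝ),
      Real.exp (-a) / 2 * Real.exp (μ*t - a * Real.exp t) ≤ F t := by
    intro t ht
    have ht0 : (0:ℝ) < t := ht
    have hcosh1 : Real.exp (μ*t) / 2 ≤ Real.cosh (μ*t) := by
      rw [Real.cosh_eq]
      have := (Real.exp_pos (-(μ*t))).le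
      linarith
    have hcosh2 : y * Real.cosh t ≤ a * Real.exp t + a := by
      rw [Real.cosh_eq, ha]
      have h1 : Real.exp (-t) ≤ 1 := Real.exp_le_one_iff.mpr (by linarith)
      nlinarith
    have h1 : Real.exp (-(a * Real.exp t + a)) ≤ Real.exp (-(y * Real.cosh t)) :=
      Real.exp_le_exp.mpr (by linarith)
    calc Real.exp (-a) / 2 * Real.exp (μ*t - a * Real.exp t)
        = Real.exp (-(a * Real.exp t + a)) * (Real.exp (μ*t) / 2) := by
          rw [show Real.exp (-a) / 2 * Real.exp (μ*t - a * Real.exp t)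
              = Real.exp (-a + (μ*t - a * Real.exp t)) / 2 by rw [Real.exp_add]; ring,
            show Real.exp (-(a * Real.exp t + a)) * (Real.exp (μ*t) / 2)
              = Real.exp (-(a * Real.exp t + a) + μ*t) / 2 by rw [Real.exp_add]; ring]
          congr 1
          ring
      _ ≤ Real.exp (-(y * Real.cosh t)) * Real.cosh (μ*t) := by
          refine mul_le_mul h1 hcosh1 (by positivity) (Real.exp_pos _).le
  -- assemble
  have hmain : Real.exp (-a) / 2 * ∫ t in Set.Ioi (0:ℝ), Real.exp (μ*t - a * Real.exp t)
      ≤ besselK μ y := by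
    rw [besselK, ← integral_const_mul]
    exact setIntegral_mono_on (hM_int.const_mul _) hF_int measurableSet_Ioi hF_ge
  have hfinal : Real.Gamma μ * (2/y)^μ * Real.exp (-y) / 2
      = Real.exp (-a) / 2 * (Real.exp (-a) * ((1/a)^μ * Real.Gamma μ)) := by
    have h2y : (2:ℝ)/y = 1/a := by rw [ha]; field_simp
    have hey : Real.exp (-y) = Real.exp (-a) * Real.exp (-a) := by
      rw [← Real.exp_add]; congr 1; rw [ha]; ring
    rw [h2y, hey]
    ring
  rw [hfinal]
  calc Real.exp (-a) / 2 * (Real.exp (-a) * ((1/a)^μ * Real.Gamma μ))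
      ≤ Real.exp (-a) / 2 * ∫ u in Set.Ioi (1:ℝ), g u := by
        exact mul_le_mul_of_nonneg_left hshift_ge (by positivity)
    _ = Real.exp (-a) / 2 * ∫ t in Set.Ioi (0:ℝ), Real.exp (μ*t - a * Real.exp t) := by rw [hE]
    _ ≤ besselK μ y := hmain

/-- Inequality (4.1). -/
theorem bessel_ratio_term_bound (ν y : ℝ) (hν : 0 ≤ ν) (hy : 0 < y) (n : ℕ) (hn : 1 ≤ n) :
    (ν + n) * Real.Gamma (2 * ν + n) / (n.factorial : ℝ)
        * (besselI (ν + n) y / besselK (ν + n) y)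
      ≤ y ^ (2 * ν) * Real.Gamma (2 * ν + 1) / (2 ^ ν * Real.Gamma (ν + 1) ^ 2)
        * (y ^ (2 * n) / (2 ^ n * (n.factorial : ℝ) * ((n - 1).factorial : ℝ)))
        * Real.exp (2 * y) := by
  have hn1 : (1:ℝ) ≤ (n:ℝ) := by exact_mod_cast hn
  have hμ1 : 1 ≤ ν + (n:ℝ) := by linarith
  have hμ0 : (0:ℝ) ≤ ν + (n:ℝ) := by linarith
  have hμpos : (0:ℝ) < ν + (n:ℝ) := by linarith
  set s : ℝ := (y/2) ^ (ν + (n:ℝ)) with hs_def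
  have hs : 0 < s := Real.rpow_pos_of_pos (by linarith) _
  set E : ℝ := Real.exp y with hE_def
  have hexp2 : Real.exp (2*y) = E * E := by
    rw [hE_def, ← Real.exp_add]; congr 1; ring
  have hEpos : 0 < E := Real.exp_pos y
  -- Gamma positivity
  have hG2 : 0 < Real.Gamma (ν + (n:ℝ)) := Real.Gamma_pos_of_pos hμpos
  have hG1 : 0 < Real.Gamma (2*ν + (n:ℝ)) := Real.Gamma_pos_of_pos (by linarith)
  have hG3 : 0 < Real.Gamma (2*ν + 1) := Real.Gamma_pos_of_pos (by linarith)
  have hG4 : 0 < Real.Gamma (ν + 1) := Real.Gamma_pos_of_pos (by linarith)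
  have hf : (0:ℝ) < (n.factorial : ℝ) := by positivity
  have hf1 : (0:ℝ) < ((n-1).factorial : ℝ) := by positivity
  -- bounds on Bessel functions
  have hKl : Real.Gamma (ν+(n:ℝ)) * (2/y)^(ν+(n:ℝ)) * Real.exp (-y) / 2 ≤ besselK (ν+(n:ℝ)) y :=
    besselK_ge _ y hμ1 hy
  set Kl : ℝ := Real.Gamma (ν+(n:ℝ)) * (2/y)^(ν+(n:ℝ)) * Real.exp (-y) / 2 with hKl_def
  have hKlpos : 0 < Kl := by
    have : (0:ℝ) < (2/y)^(ν+(n:ℝ)) := Real.rpow_pos_of_pos (by positivity) _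
    positivity
  have hIu : besselI (ν+(n:ℝ)) y ≤ s / Real.Gamma ((ν+(n:ℝ))+1) * E :=
    besselI_le _ y hμ0 hy
  set Iu : ℝ := s / Real.Gamma ((ν+(n:ℝ))+1) * E with hIu_def
  have hGadd : Real.Gamma ((ν+(n:ℝ))+1) = (ν+(n:ℝ)) * Real.Gamma (ν+(n:ℝ)) :=
    Real.Gamma_add_one hμpos.ne'
  have hIupos : 0 < Iu := by
    rw [hIu_def, hGadd]; positivity
  have hInn : 0 ≤ besselI (ν+(n:ℝ)) y := by
    rw [besselI]
    refine tsum_nonneg fun k => ?_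
    have h1 : (0:ℝ) < (y/2) ^ (2*(k:ℝ) + (ν+(n:ℝ))) := Real.rpow_pos_of_pos (by linarith) _
    have h2 : (0:ℝ) < Real.Gamma ((k:ℝ) + (ν+(n:ℝ)) + 1) := Real.Gamma_pos_of_pos (by positivity)
    positivity
  have hA : (0:ℝ) ≤ (ν + (n:ℝ)) * Real.Gamma (2*ν + (n:ℝ)) / (n.factorial : ℝ) := by positivity
  have hstep1 : (ν + (n:ℝ)) * Real.Gamma (2 * ν + (n:ℝ)) / (n.factorial : ℝ)
        * (besselI (ν + (n:ℝ)) y / besselK (ν + (n:ℝ)) y)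
      ≤ (ν + (n:ℝ)) * Real.Gamma (2 * ν + (n:ℝ)) / (n.factorial : ℝ) * (Iu / Kl) :=
    mul_le_mul_of_nonneg_left (div_le_div₀ hIupos.le hIu hKlpos hKl) hA
  refine le_trans hstep1 ?_
  -- rewrite the bound in closed form
  have h2yinv : ((2:ℝ)/y)^(ν+(n:ℝ)) = s⁻¹ := by
    rw [hs_def, ← Real.inv_rpow (by positivity : (0:ℝ) ≤ y/2)]
    congr 1
    field_simp
  have hexpneg : Real.exp (-y) = E⁻¹ := by rw [hE_def, Real.exp_neg]
  have hstep2 : (ν + (n:ℝ)) * Real.Gamma (2 * ν + (n:ℝ)) / (n.factorial : ℝ) * (Iu / Kl)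
      = 2 * Real.Gamma (2*ν + (n:ℝ)) * s^2 * (E*E)
        / ((n.factorial : ℝ) * Real.Gamma (ν+(n:ℝ))^2) := by
    rw [hIu_def, hKl_def, hGadd, h2yinv, hexpneg]
    field_simp
  rw [hstep2, hexp2]
  -- relation between s and powers of y
  have h2ν : (0:ℝ) < (2:ℝ)^ν := Real.rpow_pos_of_pos two_pos ν
  have h2n : (0:ℝ) < (2:ℝ)^n := by positivity
  have hP : s^2 * ((2:ℝ)^ν * 2^n)^2 = y^(2*ν) * y^(2*n) := by
    have hsm : s * ((2:ℝ)^ν * 2^n) = y^ν * y^(n:ℕ) := by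
      have h2μ : (2:ℝ)^(ν+(n:ℝ)) = 2^ν * 2^n := by
        rw [Real.rpow_add two_pos, Real.rpow_natCast]
      calc s * ((2:ℝ)^ν * 2^n) = s * (2:ℝ)^(ν+(n:ℝ)) := by rw [h2μ]
        _ = ((y/2) * 2)^(ν+(n:ℝ)) := by
            rw [hs_def, ← Real.mul_rpow (by positivity) (by positivity)]
        _ = y^(ν+(n:ℝ)) := by norm_num
        _ = y^ν * y^(n:ℕ) := by rw [Real.rpow_add hy, Real.rpow_natCast]
    have hy2ν : y^(2*ν) = (y^ν)^(2:ℕ) := by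
      rw [show (2:ℝ)*ν = ν*2 by ring, Real.rpow_mul hy.le]
      norm_num
    have hy2n : y^(2*n) = (y^(n:ℕ))^(2:ℕ) := by
      rw [show 2*n = n*2 by ring, pow_mul]
    rw [hy2ν, hy2n, ← mul_pow, hsm, mul_pow]
  have key := lemE ν hν n hn
  have hRHS : y ^ (2 * ν) * Real.Gamma (2 * ν + 1) / (2 ^ ν * Real.Gamma (ν + 1) ^ 2)
        * (y ^ (2 * n) / (2 ^ n * (n.factorial : ℝ) * ((n - 1).factorial : ℝ)))
        * (E*E)
      = y^(2*ν) * y^(2*n) * Real.Gamma (2*ν+1) * (E*E)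
        / ((2:ℝ)^ν * Real.Gamma (ν+1)^2 * ((2:ℝ)^n * (n.factorial : ℝ) * ((n-1).factorial : ℝ))) := by
    ring
  rw [hRHS, ← hP]
  have hLHS : 2 * Real.Gamma (2*ν + (n:ℝ)) * s^2 * (E*E)
        / ((n.factorial : ℝ) * Real.Gamma (ν+(n:ℝ))^2)
      = 2 * Real.Gamma (2*ν + (n:ℝ)) * (s^2 * ((2:ℝ)^ν * 2^n)^2) * (E*E)
        / ((n.factorial : ℝ) * Real.Gamma (ν+(n:ℝ))^2 * ((2:ℝ)^ν * 2^n)^2) := by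
    rw [div_eq_div_iff (by positivity) (by positivity)]
    ring
  rw [hLHS]
  rw [div_le_div_iff₀ (by positivity) (by positivity)]
  calc 2 * Real.Gamma (2*ν + (n:ℝ)) * (s^2 * ((2:ℝ)^ν * 2^n)^2) * (E*E)
        * ((2:ℝ)^ν * Real.Gamma (ν+1)^2 * ((2:ℝ)^n * (n.factorial : ℝ) * ((n-1).factorial : ℝ)))
      = (2 * Real.Gamma (2*ν+(n:ℝ)) * Real.Gamma (ν+1)^2 * ((n-1).factorial : ℝ))
        * ((s^2 * ((2:ℝ)^ν * 2^n)^2) * (E*E) * (2:ℝ)^ν * (2:ℝ)^n * (n.factorial : ℝ)) := by ring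
    _ ≤ ((2:ℝ)^ν * 2^n * Real.Gamma (2*ν+1) * Real.Gamma (ν+(n:ℝ))^2)
        * ((s^2 * ((2:ℝ)^ν * 2^n)^2) * (E*E) * (2:ℝ)^ν * (2:ℝ)^n * (n.factorial : ℝ)) :=
        mul_le_mul_of_nonneg_right key (by positivity)
    _ = s^2 * ((2:ℝ)^ν * 2^n)^2 * Real.Gamma (2*ν+1) * (E*E)
        * ((n.factorial : ℝ) * Real.Gamma (ν+(n:ℝ))^2 * ((2:ℝ)^ν * 2^n)^2) := by ring
end
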